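/- One has N_0 = (), N_1 = (1), N_2 = (10), N_3 = (100, 101), and for every n ≥ 4, writing N_{n−1} = (w_0, …, w_{F_{n−1}−1}): (i) for each 0 ≤ m < F_{n−1} there is a unique q(m) ∈ {−2, −1, 0, 1, 2} of minimal absolute value such that 0 ≤ m + q(m) < F_{n−1} and w_{m+q(m)} ends with the digit 1; (ii) N_n is the concatenation, over m = 0, …, F_{n−1}−1, of the blocks V_m, where V_m = (w_m0) if q(m) = 0, V_m = (w_m0, w_m1) if q(m) ∈ {−1, 2}, and V_m = (w_m1, w_m0) if q(m) ∈ {−2, 1} (here w_m0 and w_m1 denote the word w_m with a final digit 0 or 1 appended). -/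

import Mathlib

/-- A ZF-word: a binary word (leftmost digit at the head of the list) with no two
consecutive digits `1`. -/
def ZFword (w : List Bool) : Prop :=
  w.Chain' fun a b => ¬(a = true ∧ b = true)

/-- The lists `N_n` of binary words: `N_0 = ()`, `N_1 = (1)` and, for `n ≥ 2`,
`N_n = 10·rev(N_{n-1}') ++ 10·rev(N_{n-2})`, where `L'` removes the leftmost letter
of each word of `L`, `rev` reverses the order of the list and `10·L` prefixes `10`
to each word of `L`. -/
def Nlist : ℕ → List (List Bool)
  | 0 => []
  | 1 => [[true]]
  | (n + 2) =>
      ((Nlist (n + 1)).map List.tail).reverse.map (fun w => true :: false :: w) ++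
        (Nlist n).reverse.map (fun w => true :: false :: w)

/-- The `i`-th term `g_i` (for `i ≥ 1`) of the infinite list
`G = N_1 ++ N_2 ++ N_3 ++ ⋯`; the block `N_n` occupies the (1-indexed) positions
`F (n+1), …, F (n+2) - 1` of `G`. -/
def Gword (i : ℕ) : List Bool :=
  (((List.range (i + 2)).map Nlist).flatten).getD (i - 1) []

/-- The Hamming distance of two binary words (leftmost digit at the head), the shorter
word being padded with leading `0`s: the number of positions (counted from the right)
at which the two words differ. -/
def hammingWords (w w' : List Bool) : ℕ :=
  ((Finset.range (max w.length w'.length)).filter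
    (fun i => w.reverse.getD i false ≠ w'.reverse.getD i false)).card

/-- `q` is an admissible shift at position `m` for the list `N_n`:
`q ∈ {-2,…,2}`, `0 ≤ m + q < F n`, and the word `w_{m+q}` of `N_n` ends with the
digit `1`. -/
def ValidShift (n m : ℕ) (q : ℤ) : Prop :=
  -2 ≤ q ∧ q ≤ 2 ∧ 0 ≤ (m : ℤ) + q ∧ (m : ℤ) + q < (Nat.fib n : ℤ) ∧
    ((Nlist n).getD ((m : ℤ) + q).toNat []).getLast? = some true

/-- The block `V_m` built from the word `w_m` of `N_n` and the shift `q = q(m)`. -/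
def Vblock (n m : ℕ) (q : ℤ) : List (List Bool) :=
  if q = 0 then [(Nlist n).getD m [] ++ [false]]
  else if q = -1 ∨ q = 2 then
    [(Nlist n).getD m [] ++ [false], (Nlist n).getD m [] ++ [true]]
  else [(Nlist n).getD m [] ++ [true], (Nlist n).getD m [] ++ [false]]

/-! ### Auxiliary definitions -/

/-- The generic block construction. -/
def VB (w : List Bool) (q : ℤ) : List (List Bool) :=
  if q = 0 then [w ++ [false]]
  else if q = -1 ∨ q = 2 then [w ++ [false], w ++ [true]]
  else [w ++ [true], w ++ [false]]

/-- The list of last digits of the words of `Nlist n`. -/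
def blist : ℕ → List Bool
  | 0 => []
  | 1 => [true]
  | 2 => [false]
  | 3 => [false, true]
  | (n + 4) => (blist (n + 3)).reverse ++ (blist (n + 2)).reverse

/-- The list of minimal shifts for `N_{n-1}` (defined for `n ≥ 4`). -/
def Slist : ℕ → List ℤ
  | 4 => [1, 0]
  | 5 => [0, -1, -2]
  | (n + 6) => (Slist (n + 5)).reverse.map (fun q => -q) ++
      (Slist (n + 4)).reverse.map (fun q => -q)
  | _ => []

def Valid' (b : List Bool) (m : ℕ) (q : ℤ) : Prop :=
  -2 ≤ q ∧ q ≤ 2 ∧ 0 ≤ (m : ℤ) + q ∧ (m : ℤ) + q < (b.length : ℤ) ∧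
    b.getD ((m : ℤ) + q).toNat false = true

instance (b : List Bool) (m : ℕ) (q : ℤ) : Decidable (Valid' b m q) := by
  unfold Valid'; infer_instance

def Best (b : List Bool) (m : ℕ) (q : ℤ) : Prop :=
  Valid' b m q ∧ ∀ q' ∈ Finset.Icc (-2 : ℤ) 2, Valid' b m q' →
    (q.natAbs < q'.natAbs ∨ q' = q)

noncomputable instance (b : List Bool) (m : ℕ) (q : ℤ) : Decidable (Best b m q) := by
  unfold Best; infer_instance

def QOK (b : List Bool) (s : List ℤ) : Prop :=
  b.length = s.length ∧ ∀ m < b.length, Best b m (s.getD m 0)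

noncomputable instance (b : List Bool) (s : List ℤ) : Decidable (QOK b s) := by
  unfold QOK
  have : ∀ m, Decidable (m < b.length → Best b m (s.getD m 0)) := fun m => by
    infer_instance
  exact instDecidableAnd

/-! ### Length and membership lemmas -/

lemma Nlist_length : ∀ n, (Nlist n).length = Nat.fib n
  | 0 => rfl
  | 1 => rfl
  | (n + 2) => by
    rw [Nlist, Nat.fib_add_two]
    simp [Nlist_length (n + 1), Nlist_length n, Nat.add_comm]

lemma Nlist_mem_length : ∀ n, ∀ w ∈ Nlist n, w.length = n
  | 0 => by simp [Nlist]
  | 1 => by simp [Nlist]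
  | (n + 2) => by
    intro w hw
    rw [Nlist] at hw
    rcases List.mem_append.1 hw with h | h <;>
      simp only [List.mem_map, List.mem_reverse] at h
    · obtain ⟨v, hv, rfl⟩ := h
      obtain ⟨u, hu, rfl⟩ := hv
      have := Nlist_mem_length (n + 1) u hu
      simp [List.length_tail, this]
    · obtain ⟨v, hv, rfl⟩ := h
      have := Nlist_mem_length n v hv
      simp [this]

lemma Nlist_mem_ne_nil {n : ℕ} (hn : 1 ≤ n) {w : List Bool} (hw : w ∈ Nlist n) : w ≠ [] := by
  have := Nlist_mem_length n w hw
  intro h; rw [h] at this; simp at this; omega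

lemma blist_length : ∀ n, (blist n).length = Nat.fib n
  | 0 => rfl
  | 1 => rfl
  | 2 => rfl
  | 3 => rfl
  | (n + 4) => by
    rw [blist, Nat.fib_add_two]
    simp only [List.length_append, List.length_reverse, blist_length (n + 3),
      blist_length (n + 2), show n + 2 + 1 = n + 3 from rfl]
    omega

lemma Slist_length : ∀ n, (Slist (n + 4)).length = Nat.fib (n + 3)
  | 0 => rfl
  | 1 => rfl
  | (n + 2) => by
    show (Slist (n + 6)).length = _
    rw [Slist, Nat.fib_add_two]
    have h1 := Slist_length (n + 1)
    have h2 := Slist_length n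
    simp only [List.length_append, List.length_map, List.length_reverse, h1, h2,
      show n + 1 + 3 = n + 4 from rfl, show n + 3 + 1 = n + 4 from rfl]
    omega

lemma Slist_mem : ∀ n, ∀ q ∈ Slist n, -2 ≤ q ∧ q ≤ 2 := by
  intro n
  induction n using Nat.strong_induction_on with
  | _ n ih =>
    match n with
    | 0 | 1 | 2 | 3 => simp [Slist]
    | 4 => decide
    | 5 => decide
    | (n + 6) => 
      intro q hq
      rw [Slist] at hq
      rcases List.mem_append.1 hq with h | h <;>
        simp only [List.mem_map, List.mem_reverse] at h <;>
        obtain ⟨p, hp, rfl⟩ := h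
      · have := ih (n + 5) (by omega) p hp; omega
      · have := ih (n + 4) (by omega) p hp; omega

/-- `blist` really is the list of last digits of `Nlist`. -/
lemma blist_eq : ∀ n, blist n = (Nlist n).map (fun w => w.getLastD false) := by
  intro n
  induction n using Nat.strong_induction_on with
  | _ n ih =>
    match n with
    | 0 | 1 | 2 | 3 => rfl
    | (n + 4) => 
      rw [blist, Nlist, List.map_append, List.map_map, List.map_map,
        ih (n + 3) (by omega), ih (n + 2) (by omega)]
      congr 1
      · simp only [← List.map_reverse]
        rw [List.map_map]
        apply List.map_congr_left
        intro w hw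
        rw [List.mem_reverse] at hw
        have hlen := Nlist_mem_length _ w hw
        match w, hlen with
        | (a :: b :: t), _ => simp [List.getLastD]
      · simp only [← List.map_reverse]
        apply List.map_congr_left
        intro w hw
        rw [List.mem_reverse] at hw
        have hlen := Nlist_mem_length _ w hw
        match w, hlen with
        | (a :: t), _ => simp [List.getLastD]

/-! ### VB lemmas -/

lemma VB_neg (w : List Bool) (q : ℤ) (h1 : -2 ≤ q) (h2 : q ≤ 2) :
    VB w (-q) = (VB w q).reverse := by
  interval_cases q <;> rfl

lemma VB_cons (a b : Bool) (w : List Bool) (q : ℤ) :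
    VB (a :: b :: w) q = (VB w q).map (fun u => a :: b :: u) := by
  unfold VB
  split_ifs <;> rfl

lemma VB_tail (w : List Bool) (q : ℤ) (hw : w ≠ []) :
    (VB w q).map List.tail = VB w.tail q := by
  obtain ⟨a, t, rfl⟩ : ∃ a t, w = a :: t := ⟨w.head hw, w.tail, (List.cons_head_tail hw).symm⟩
  unfold VB
  split_ifs <;> rfl

lemma zipWith_congr' {α β γ : Type*} {f g : α → β → γ} :
    ∀ (l1 : List α) (l2 : List β), (∀ a ∈ l1, ∀ b ∈ l2, f a b = g a b) →
      List.zipWith f l1 l2 = List.zipWith g l1 l2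
  | [], _, _ => by simp
  | _ :: _, [], _ => by simp
  | a :: l1, b :: l2, h => by
    simp only [List.zipWith_cons_cons]
    rw [h a (by simp) b (by simp), zipWith_congr' l1 l2 (fun x hx y hy => h x (by simp [hx]) y (by simp [hy]))]

/-- The key transformation used for both halves of the recurrence. -/
lemma half_transform (N : List (List Bool)) (S : List ℤ)
    (hlen : N.length = S.length) (hS : ∀ q ∈ S, -2 ≤ q ∧ q ≤ 2) :
    (List.zipWith VB (N.reverse.map (fun w => true :: false :: w)) (S.reverse.map (fun q => -q))).flatten
      = (((List.zipWith VB N S).flatten).map (fun w => true :: false :: w)).reverse := by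
  rw [List.zipWith_map_left, List.zipWith_map_right]
  rw [zipWith_congr' (f := fun w q => VB (true :: false :: w) (-q))
      (g := fun w q => ((VB w q).map (fun u => true :: false :: u)).reverse)
      N.reverse S.reverse (by
        intro w hw q hq
        rw [List.mem_reverse] at hq
        obtain ⟨hq1, hq2⟩ := hS q hq
        show VB (true :: false :: w) (-q) = ((VB w q).map (fun u => true :: false :: u)).reverse
        rw [VB_neg _ _ (by omega) (by omega), VB_cons])]
  rw [← List.map_zipWith (f := fun l => (List.map (fun u => true :: false :: u) l).reverse) (g := VB) (l := N.reverse) (l' := S.reverse)]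
  rw [← List.reverse_zipWith hlen]
  rw [show (fun (l : List (List Bool)) => (List.map (fun u => true :: false :: u) l).reverse)
      = (fun l => l.reverse) ∘ (fun l : List (List Bool) => List.map (fun u => true :: false :: u) l) from rfl]
  rw [← List.map_map, List.map_reverse,
    show (fun l : List (List Bool) => l.reverse) = List.reverse from rfl,
    List.map_reverse, ← List.reverse_flatten, List.map_flatten]

/-- Main structural lemma: part (ii). -/
lemma Nlist_flatten : ∀ n, Nlist (n + 4) = (List.zipWith VB (Nlist (n + 3)) (Slist (n + 4))).flatten
  | 0 => by decide
  | 1 => by decide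
  | (n + 2) => by
    have ih1 : Nlist (n + 5) = (List.zipWith VB (Nlist (n + 4)) (Slist (n + 5))).flatten :=
      Nlist_flatten (n + 1)
    have ih2 : Nlist (n + 4) = (List.zipWith VB (Nlist (n + 3)) (Slist (n + 4))).flatten :=
      Nlist_flatten n
    have hlen1 : ((Nlist (n + 4)).map List.tail).length = (Slist (n + 5)).length := by
      rw [List.length_map, Nlist_length, show n + 5 = (n + 1) + 4 from rfl,
        Slist_length (n + 1)]
    have hlen2 : (Nlist (n + 3)).length = (Slist (n + 4)).length := by
      rw [Nlist_length, Slist_length n]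
    have key : (List.zipWith VB ((Nlist (n + 4)).map List.tail) (Slist (n + 5))).flatten
        = (Nlist (n + 5)).map List.tail := by
      rw [List.zipWith_map_left]
      rw [zipWith_congr' (f := fun w q => VB w.tail q)
        (g := fun w q => (VB w q).map List.tail) _ _ (by
          intro w hw q hq
          exact (VB_tail w q (Nlist_mem_ne_nil (by omega) hw)).symm)]
      rw [← List.map_zipWith (f := fun l => l.map List.tail) (g := VB),
        show (fun l : List (List Bool) => l.map List.tail) = List.map List.tail from rfl,
        ← List.map_flatten, ← ih1]
    show Nlist (n + 6) = (List.zipWith VB (Nlist (n + 5)) (Slist (n + 6))).flatten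
    rw [show Slist (n + 6) = (Slist (n + 5)).reverse.map (fun q => -q) ++
        (Slist (n + 4)).reverse.map (fun q => -q) from rfl]
    rw [show Nlist (n + 5) = ((Nlist (n + 4)).map List.tail).reverse.map
        (fun w => true :: false :: w) ++ (Nlist (n + 3)).reverse.map
        (fun w => true :: false :: w) from rfl]
    rw [List.zipWith_append (by simpa using hlen1)]
    rw [List.flatten_append]
    rw [half_transform _ _ hlen1 (Slist_mem _), half_transform _ _ hlen2 (Slist_mem _)]
    rw [key, ← ih2]
    rw [show Nlist (n + 6) = ((Nlist (n + 5)).map List.tail).reverse.map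
        (fun w => true :: false :: w) ++ (Nlist (n + 4)).reverse.map
        (fun w => true :: false :: w) from rfl]
    rw [List.map_reverse, List.map_reverse]

/-! ### getD helper lemmas -/

lemma getD_rev {α : Type*} (l : List α) (d : α) {i : ℕ} (h : i < l.length) :
    l.reverse.getD i d = l.getD (l.length - 1 - i) d := by
  rw [List.getD_eq_getElem _ _ (by simpa using h), List.getD_eq_getElem _ _ (by omega),
    List.getElem_reverse]

lemma getD_neg (s : List ℤ) (i : ℕ) :
    (s.map (fun q => -q)).getD i 0 = -(s.getD i 0) := by
  simpa using List.getD_map s 0 (n := i) (fun q : ℤ => -q)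

lemma Valid'_reverse {b : List Bool} {m : ℕ} (h : m < b.length) (q : ℤ) :
    Valid' b.reverse m q ↔ Valid' b (b.length - 1 - m) (-q) := by
  have hL : b.reverse.length = b.length := List.length_reverse
  unfold Valid'
  rw [hL]
  constructor
  · rintro ⟨h1, h2, h3, h4, h5⟩
    refine ⟨by omega, by omega, by omega, by omega, ?_⟩
    rw [getD_rev b false (by omega : ((m : ℤ) + q).toNat < b.length)] at h5
    convert h5 using 2
    omega
  · rintro ⟨h1, h2, h3, h4, h5⟩
    refine ⟨by omega, by omega, by omega, by omega, ?_⟩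
    rw [getD_rev b false (by omega : ((m : ℤ) + q).toNat < b.length)]
    convert h5 using 2
    omega

lemma QOK_reverse {b : List Bool} {s : List ℤ} (h : QOK b s) :
    QOK b.reverse (s.reverse.map (fun q => -q)) := by
  obtain ⟨hlen, hb⟩ := h
  refine ⟨by simp [hlen], ?_⟩
  intro m hm
  rw [List.length_reverse] at hm
  have hm' : b.length - 1 - m < b.length := by omega
  have hget : (s.reverse.map (fun q => -q)).getD m 0 = -(s.getD (b.length - 1 - m) 0) := by
    rw [getD_neg, getD_rev s 0 (by omega : m < s.length), ← hlen]
  obtain ⟨hv, hmin⟩ := hb _ hm'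
  constructor
  · rw [hget]
    exact (Valid'_reverse hm _).mpr (by simpa using hv)
  · intro q' hq' hvq'
    simp only [Finset.mem_Icc] at hq'
    have := hmin (-q') (by simp only [Finset.mem_Icc]; omega) ((Valid'_reverse hm q').mp hvq')
    rw [hget]
    rcases this with h | h
    · left; simpa using h
    · right; omega

lemma Valid'_append_left {b1 b2 : List Bool} {m : ℕ} {q : ℤ} (hm : m < b1.length)
    (hq : Valid' b1 m q) : Valid' (b1 ++ b2) m q := by
  obtain ⟨h1, h2, h3, h4, h5⟩ := hq
  refine ⟨h1, h2, h3, by simp; omega, ?_⟩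
  rw [List.getD_append _ _ _ _ (by omega)]
  exact h5

lemma Valid'_append_left_inv {b1 b2 : List Bool} {m : ℕ} {q : ℤ} (hm : m < b1.length)
    (hlt : (m : ℤ) + q < b1.length) (hq : Valid' (b1 ++ b2) m q) : Valid' b1 m q := by
  obtain ⟨h1, h2, h3, h4, h5⟩ := hq
  refine ⟨h1, h2, h3, hlt, ?_⟩
  rw [List.getD_append _ _ _ _ (by omega)] at h5
  exact h5

lemma Valid'_append_right {b1 b2 : List Bool} {m : ℕ} {q : ℤ} (hm : m < b2.length)
    (hq : Valid' b2 m q) : Valid' (b1 ++ b2) (b1.length + m) q := by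
  obtain ⟨h1, h2, h3, h4, h5⟩ := hq
  refine ⟨h1, h2, by omega, by simp; omega, ?_⟩
  rw [List.getD_append_right _ _ _ _ (by omega)]
  convert h5 using 2
  omega

lemma Valid'_append_right_inv {b1 b2 : List Bool} {m : ℕ} {q : ℤ} (hm : m < b2.length)
    (hge : (b1.length : ℤ) ≤ (b1.length + m : ℤ) + q)
    (hq : Valid' (b1 ++ b2) (b1.length + m) q) : Valid' b2 m q := by
  obtain ⟨h1, h2, h3, h4, h5⟩ := hq
  refine ⟨h1, h2, by omega, by simp at h4; omega, ?_⟩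
  rw [List.getD_append_right _ _ _ _ (by omega)] at h5
  convert h5 using 2
  omega

lemma QOK_append {b1 b2 : List Bool} {s1 s2 : List ℤ}
    (h1 : QOK b1 s1) (h2 : QOK b2 s2)
    (hL1 : 2 ≤ b1.length) (hL2 : 2 ≤ b2.length)
    (H1 : b2.getD 0 false = true → s1.getD (b1.length - 1) 0 = 0)
    (H2 : b2.getD 1 false = true → (s1.getD (b1.length - 1) 0).natAbs ≤ 1)
    (H3 : b2.getD 0 false = true → (s1.getD (b1.length - 2) 0).natAbs ≤ 1)
    (H4 : b1.getD (b1.length - 1) false = true → s2.getD 0 0 = 0)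
    (H5 : b1.getD (b1.length - 2) false = true → (s2.getD 0 0).natAbs ≤ 1)
    (H6 : b1.getD (b1.length - 1) false = true → (s2.getD 1 0).natAbs ≤ 1) :
    QOK (b1 ++ b2) (s1 ++ s2) := by
  obtain ⟨hlen1, hb1⟩ := h1
  obtain ⟨hlen2, hb2⟩ := h2
  refine ⟨by simp [hlen1, hlen2], ?_⟩
  intro m hm
  rw [List.length_append] at hm
  by_cases hcase : m < b1.length
  · -- position inside `b1`
    have hgs : (s1 ++ s2).getD m 0 = s1.getD m 0 :=
      List.getD_append _ _ _ _ (by omega)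
    rw [hgs]
    obtain ⟨hv, hmin⟩ := hb1 m hcase
    refine ⟨Valid'_append_left hcase hv, ?_⟩
    intro q' hq' hvq'
    simp only [Finset.mem_Icc] at hq'
    by_cases hin : (m : ℤ) + q' < b1.length
    · exact hmin q' (by simp only [Finset.mem_Icc]; omega)
        (Valid'_append_left_inv hcase hin hvq')
    · -- the candidate shift lands in `b2`
      left
      obtain ⟨g1, g2, g3, g4, g5⟩ := hvq'
      have hv4 := hv.2.2.2.1
      rw [List.getD_append_right _ _ _ _ (by omega)] at g5
      have hd : ((m : ℤ) + q').toNat - b1.length = 0 ∨ ((m : ℤ) + q').toNat - b1.length = 1 := by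
        omega
      have hcases : (q' = 1 ∧ m = b1.length - 1 ∧ ((m : ℤ) + q').toNat - b1.length = 0) ∨
          (q' = 2 ∧ m = b1.length - 1 ∧ ((m : ℤ) + q').toNat - b1.length = 1) ∨
          (q' = 2 ∧ m = b1.length - 2 ∧ ((m : ℤ) + q').toNat - b1.length = 0) := by
        omega
      rcases hcases with ⟨hq, hm', he⟩ | ⟨hq, hm', he⟩ | ⟨hq, hm', he⟩
      · rw [he] at g5
        have h0 := H1 g5
        subst hq
        rw [hm', h0]
        decide
      · rw [he] at g5
        have h0 := H2 g5
        subst hq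
        rw [hm']
        omega
      · rw [he] at g5
        have h0 := H3 g5
        subst hq
        rw [hm']
        omega
  · -- position inside `b2`
    obtain ⟨m', rfl⟩ : ∃ m', m = b1.length + m' := ⟨m - b1.length, by omega⟩
    have hm2 : m' < b2.length := by omega
    have hgs : (s1 ++ s2).getD (b1.length + m') 0 = s2.getD m' 0 := by
      rw [List.getD_append_right _ _ _ _ (by omega)]
      congr 1
      omega
    rw [hgs]
    obtain ⟨hv, hmin⟩ := hb2 m' hm2
    refine ⟨Valid'_append_right hm2 hv, ?_⟩
    intro q' hq' hvq'
    simp only [Finset.mem_Icc] at hq'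
    by_cases hin : (b1.length : ℤ) ≤ ((b1.length : ℤ) + m') + q'
    · exact hmin q' (by simp only [Finset.mem_Icc]; omega)
        (Valid'_append_right_inv hm2 (by push_cast; push_cast at hin; omega) hvq')
    · -- the candidate shift lands in `b1`
      left
      obtain ⟨g1, g2, g3, g4, g5⟩ := hvq'
      rw [List.getD_append _ _ _ _ (by push_cast at hin ⊢; omega)] at g5
      push_cast at hin
      have hcases : (q' = -1 ∧ m' = 0 ∧ (((b1.length + m' : ℕ) : ℤ) + q').toNat = b1.length - 1) ∨
          (q' = -2 ∧ m' = 0 ∧ (((b1.length + m' : ℕ) : ℤ) + q').toNat = b1.length - 2) ∨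
          (q' = -2 ∧ m' = 1 ∧ (((b1.length + m' : ℕ) : ℤ) + q').toNat = b1.length - 1) := by
        omega
      rcases hcases with ⟨hq, hm', he⟩ | ⟨hq, hm', he⟩ | ⟨hq, hm', he⟩
      · rw [he] at g5
        have h0 := H4 g5
        subst hq hm'
        rw [h0]
        decide
      · rw [he] at g5
        have h0 := H5 g5
        subst hq hm'
        omega
      · rw [he] at g5
        have h0 := H6 g5
        subst hq hm'
        omega

/-! ### Boundary values -/

lemma two_le_fib {k : ℕ} (h : 3 ≤ k) : 2 ≤ Nat.fib k := by
  obtain ⟨j, rfl⟩ : ∃ j, k = j + 3 := ⟨k - 3, by omega⟩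
  rw [show j + 3 = j + 1 + 2 from rfl, Nat.fib_add_two]
  have h1 : 0 < Nat.fib (j + 1) := Nat.fib_pos.mpr (by omega)
  have h2 : 0 < Nat.fib (j + 1 + 1) := Nat.fib_pos.mpr (by omega)
  omega

/-- Table of first/last two entries of `blist k` and `Slist (k+1)`, by `k % 3`. -/
def Etable : ℕ → (Bool × Bool) × (Bool × Bool) × (ℤ × ℤ) × (ℤ × ℤ)
  | 0 => ((false, true), (true, false), (1, 0), (0, 1))
  | 1 => ((true, false), (false, false), (0, -1), (-2, -1))
  | _ => ((false, false), (false, true), (2, 1), (-1, 0))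

lemma getD_append_rev_left {α : Type*} (a b : List α) (d : α) (i : ℕ) (h : i < a.length) :
    (a.reverse ++ b).getD i d = a.getD (a.length - 1 - i) d := by
  rw [List.getD_append _ _ _ _ (by simpa using h), getD_rev a d (by simpa using h)]

lemma getD_append_rev_right {α : Type*} (a b : List α) (d : α) (i : ℕ)
    (h1 : a.length ≤ i) (h2 : i < a.length + b.length) :
    (a.reverse ++ b.reverse).getD i d = b.getD (b.length - 1 - (i - a.length)) d := by
  rw [List.getD_append_right _ _ _ _ (by simpa using h1),
    getD_rev b d (by simp; omega)]
  congr 2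
  simp

lemma ends : ∀ k, 3 ≤ k →
    ((blist k).getD 0 false, (blist k).getD 1 false) = (Etable (k % 3)).1 ∧
    ((blist k).getD (Nat.fib k - 1) false, (blist k).getD (Nat.fib k - 2) false)
      = (Etable (k % 3)).2.1 ∧
    ((Slist (k + 1)).getD 0 0, (Slist (k + 1)).getD 1 0) = (Etable (k % 3)).2.2.1 ∧
    ((Slist (k + 1)).getD (Nat.fib k - 1) 0, (Slist (k + 1)).getD (Nat.fib k - 2) 0)
      = (Etable (k % 3)).2.2.2 := by
  intro k
  induction k using Nat.strong_induction_on with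
  | _ k ih =>
    match k with
    | 0 | 1 | 2 => intro h; exact absurd h (by omega)
    | 3 => intro _; decide
    | 4 => intro _; decide
    | 5 => intro _; decide
    | (j + 6) =>
      intro _
      have ih5 := ih (j + 5) (by omega) (by omega)
      have ih4 := ih (j + 4) (by omega) (by omega)
      have hrec : Nat.fib (j + 6) = Nat.fib (j + 4) + Nat.fib (j + 5) := Nat.fib_add_two
      have hf5 : 2 ≤ Nat.fib (j + 5) := two_le_fib (by omega)
      have hf4 : 2 ≤ Nat.fib (j + 4) := two_le_fib (by omega)
      have l5 : (blist (j + 5)).length = Nat.fib (j + 5) := blist_length _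
      have l4 : (blist (j + 4)).length = Nat.fib (j + 4) := blist_length _
      have L6 : (Slist (j + 6)).length = Nat.fib (j + 5) := Slist_length (j + 2)
      have L5 : (Slist (j + 5)).length = Nat.fib (j + 4) := Slist_length (j + 1)
      have A1 : (blist (j + 6)).getD 0 false
          = (blist (j + 5)).getD (Nat.fib (j + 5) - 1) false := by
        rw [show blist (j + 6) = (blist (j + 5)).reverse ++ (blist (j + 4)).reverse from rfl,
          getD_append_rev_left _ _ _ _ (by omega), l5, Nat.sub_zero]
      have A2 : (blist (j + 6)).getD 1 false
          = (blist (j + 5)).getD (Nat.fib (j + 5) - 2) false := by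
        rw [show blist (j + 6) = (blist (j + 5)).reverse ++ (blist (j + 4)).reverse from rfl,
          getD_append_rev_left _ _ _ _ (by omega), l5,
          show Nat.fib (j + 5) - 1 - 1 = Nat.fib (j + 5) - 2 from by omega]
      have A3 : (blist (j + 6)).getD (Nat.fib (j + 6) - 1) false
          = (blist (j + 4)).getD 0 false := by
        rw [show blist (j + 6) = (blist (j + 5)).reverse ++ (blist (j + 4)).reverse from rfl,
          getD_append_rev_right _ _ _ _ (by omega) (by omega), l4, l5,
          show Nat.fib (j + 4) - 1 - (Nat.fib (j + 6) - 1 - Nat.fib (j + 5)) = 0 from by omega]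
      have A4 : (blist (j + 6)).getD (Nat.fib (j + 6) - 2) false
          = (blist (j + 4)).getD 1 false := by
        rw [show blist (j + 6) = (blist (j + 5)).reverse ++ (blist (j + 4)).reverse from rfl,
          getD_append_rev_right _ _ _ _ (by omega) (by omega), l4, l5,
          show Nat.fib (j + 4) - 1 - (Nat.fib (j + 6) - 2 - Nat.fib (j + 5)) = 1 from by omega]
      have hS : Slist (j + 6 + 1) = (Slist (j + 6)).reverse.map (fun q => -q)
          ++ (Slist (j + 5)).reverse.map (fun q => -q) := rfl
      have S1 : (Slist (j + 6 + 1)).getD 0 0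
          = -((Slist (j + 6)).getD (Nat.fib (j + 5) - 1) 0) := by
        rw [hS, List.getD_append _ _ _ _ (by simp; omega), getD_neg,
          getD_rev _ _ (by rw [L6]; omega), L6, Nat.sub_zero]
      have S2 : (Slist (j + 6 + 1)).getD 1 0
          = -((Slist (j + 6)).getD (Nat.fib (j + 5) - 2) 0) := by
        rw [hS, List.getD_append _ _ _ _ (by simp; omega), getD_neg,
          getD_rev _ _ (by rw [L6]; omega), L6,
          show Nat.fib (j + 5) - 1 - 1 = Nat.fib (j + 5) - 2 from by omega]
      have S3 : (Slist (j + 6 + 1)).getD (Nat.fib (j + 6) - 1) 0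
          = -((Slist (j + 5)).getD 0 0) := by
        rw [hS, List.getD_append_right _ _ _ _ (by simp; omega), getD_neg,
          getD_rev _ _ (by simp; omega)]
        congr 2
        simp only [List.length_map, List.length_reverse, L6, L5]
        omega
      have S4 : (Slist (j + 6 + 1)).getD (Nat.fib (j + 6) - 2) 0
          = -((Slist (j + 5)).getD 1 0) := by
        rw [hS, List.getD_append_right _ _ _ _ (by simp; omega), getD_neg,
          getD_rev _ _ (by simp; omega)]
        congr 2
        simp only [List.length_map, List.length_reverse, L6, L5]
        omega
      rcases (by omega : ((j + 6) % 3 = 0 ∧ (j + 5) % 3 = 2 ∧ (j + 4) % 3 = 1) ∨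
          ((j + 6) % 3 = 1 ∧ (j + 5) % 3 = 0 ∧ (j + 4) % 3 = 2) ∨
          ((j + 6) % 3 = 2 ∧ (j + 5) % 3 = 1 ∧ (j + 4) % 3 = 0)) with
        ⟨e6, e5, e4⟩ | ⟨e6, e5, e4⟩ | ⟨e6, e5, e4⟩ <;>
      · rw [e5] at ih5
        rw [e4] at ih4
        rw [e6]
        simp only [Etable, Prod.mk.injEq] at ih5 ih4
        obtain ⟨⟨i1, i2⟩, ⟨i3, i4⟩, ⟨i5, i6⟩, ⟨i7, i8⟩⟩ := ih5
        obtain ⟨⟨k1, k2⟩, ⟨k3, k4⟩, ⟨k5, k6⟩, ⟨k7, k8⟩⟩ := ih4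
        refine ⟨?_, ?_, ?_, ?_⟩ <;>
          simp only [Etable, Prod.mk.injEq, A1, A2, A3, A4, S1, S2, S3, S4,
            i1, i2, i3, i4, i5, i6, i7, i8, k1, k2, k3, k4, k5, k6, k7, k8] <;>
          norm_num

lemma mainQOK : ∀ n, QOK (blist (n + 3)) (Slist (n + 4))
  | 0 => by decide
  | 1 => by decide
  | (n + 2) => by
    have ih1 : QOK (blist (n + 4)) (Slist (n + 5)) := mainQOK (n + 1)
    have ih2 : QOK (blist (n + 3)) (Slist (n + 4)) := mainQOK n
    have E5 := ends (n + 4) (by omega)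
    have E4 := ends (n + 3) (by omega)
    rw [show n + 4 + 1 = n + 5 from rfl] at E5
    rw [show n + 3 + 1 = n + 4 from rfl] at E4
    have hf4 : 2 ≤ Nat.fib (n + 4) := two_le_fib (by omega)
    have hf3 : 2 ≤ Nat.fib (n + 3) := two_le_fib (by omega)
    have l4 : (blist (n + 4)).length = Nat.fib (n + 4) := blist_length _
    have l3 : (blist (n + 3)).length = Nat.fib (n + 3) := blist_length _
    have L5 : (Slist (n + 5)).length = Nat.fib (n + 4) := Slist_length (n + 1)
    have L4 : (Slist (n + 4)).length = Nat.fib (n + 3) := Slist_length n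
    -- boundary-value translation equations
    have eB2_0 : (blist (n + 3)).reverse.getD 0 false
        = (blist (n + 3)).getD (Nat.fib (n + 3) - 1) false := by
      rw [getD_rev _ _ (by omega), l3, Nat.sub_zero]
    have eB2_1 : (blist (n + 3)).reverse.getD 1 false
        = (blist (n + 3)).getD (Nat.fib (n + 3) - 2) false := by
      rw [getD_rev _ _ (by omega), l3,
        show Nat.fib (n + 3) - 1 - 1 = Nat.fib (n + 3) - 2 from by omega]
    have eB1_last : (blist (n + 4)).reverse.getD ((blist (n + 4)).reverse.length - 1) false
        = (blist (n + 4)).getD 0 false := by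
      rw [List.length_reverse, getD_rev _ _ (by omega),
        show (blist (n + 4)).length - 1 - ((blist (n + 4)).length - 1) = 0 from by omega]
    have eB1_snd : (blist (n + 4)).reverse.getD ((blist (n + 4)).reverse.length - 2) false
        = (blist (n + 4)).getD 1 false := by
      rw [List.length_reverse, getD_rev _ _ (by omega),
        show (blist (n + 4)).length - 1 - ((blist (n + 4)).length - 2) = 1 from by omega]
    have eS1_last : ((Slist (n + 5)).reverse.map (fun q => -q)).getD
          ((blist (n + 4)).reverse.length - 1) 0 = -((Slist (n + 5)).getD 0 0) := by
      rw [List.length_reverse, getD_neg, getD_rev _ _ (by omega),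
        show (Slist (n + 5)).length - 1 - ((blist (n + 4)).length - 1) = 0 from by omega]
    have eS1_snd : ((Slist (n + 5)).reverse.map (fun q => -q)).getD
          ((blist (n + 4)).reverse.length - 2) 0 = -((Slist (n + 5)).getD 1 0) := by
      rw [List.length_reverse, getD_neg, getD_rev _ _ (by omega),
        show (Slist (n + 5)).length - 1 - ((blist (n + 4)).length - 2) = 1 from by omega]
    have eS2_0 : ((Slist (n + 4)).reverse.map (fun q => -q)).getD 0 0
        = -((Slist (n + 4)).getD (Nat.fib (n + 3) - 1) 0) := by
      rw [getD_neg, getD_rev _ _ (by omega), L4, Nat.sub_zero]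
    have eS2_1 : ((Slist (n + 4)).reverse.map (fun q => -q)).getD 1 0
        = -((Slist (n + 4)).getD (Nat.fib (n + 3) - 2) 0) := by
      rw [getD_neg, getD_rev _ _ (by omega), L4,
        show Nat.fib (n + 3) - 1 - 1 = Nat.fib (n + 3) - 2 from by omega]
    -- the six boundary conditions in terms of the original lists
    have hK : ((blist (n + 3)).getD (Nat.fib (n + 3) - 1) false = true →
          (Slist (n + 5)).getD 0 0 = 0) ∧
        ((blist (n + 3)).getD (Nat.fib (n + 3) - 2) false = true →
          ((Slist (n + 5)).getD 0 0).natAbs ≤ 1) ∧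
        ((blist (n + 3)).getD (Nat.fib (n + 3) - 1) false = true →
          ((Slist (n + 5)).getD 1 0).natAbs ≤ 1) ∧
        ((blist (n + 4)).getD 0 false = true →
          (Slist (n + 4)).getD (Nat.fib (n + 3) - 1) 0 = 0) ∧
        ((blist (n + 4)).getD 1 false = true →
          ((Slist (n + 4)).getD (Nat.fib (n + 3) - 1) 0).natAbs ≤ 1) ∧
        ((blist (n + 4)).getD 0 false = true →
          ((Slist (n + 4)).getD (Nat.fib (n + 3) - 2) 0).natAbs ≤ 1) := by
      rcases (by omega : ((n + 3) % 3 = 0 ∧ (n + 4) % 3 = 1) ∨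
          ((n + 3) % 3 = 1 ∧ (n + 4) % 3 = 2) ∨
          ((n + 3) % 3 = 2 ∧ (n + 4) % 3 = 0)) with ⟨e3, e4⟩ | ⟨e3, e4⟩ | ⟨e3, e4⟩ <;>
      · rw [e3] at E4
        rw [e4] at E5
        simp only [Etable, Prod.mk.injEq] at E4 E5
        obtain ⟨⟨a1, a2⟩, ⟨a3, a4⟩, ⟨a5, a6⟩, ⟨a7, a8⟩⟩ := E4
        obtain ⟨⟨b1, b2⟩, ⟨b3, b4⟩, ⟨b5, b6⟩, ⟨b7, b8⟩⟩ := E5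
        refine ⟨?_, ?_, ?_, ?_, ?_, ?_⟩ <;> intro h <;>
          simp only [a1, a2, a3, a4, a5, a6, a7, a8, b1, b2, b5, b6] at h ⊢ <;>
          first
            | exact absurd h (by decide)
            | omega
    obtain ⟨K1, K2, K3, K4, K5, K6⟩ := hK
    show QOK (blist (n + 5)) (Slist (n + 6))
    rw [show blist (n + 5) = (blist (n + 4)).reverse ++ (blist (n + 3)).reverse from rfl,
      show Slist (n + 6) = (Slist (n + 5)).reverse.map (fun q => -q) ++
        (Slist (n + 4)).reverse.map (fun q => -q) from rfl]
    refine QOK_append (QOK_reverse ih1) (QOK_reverse ih2) ?_ ?_ ?_ ?_ ?_ ?_ ?_ ?_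
    · rw [List.length_reverse, l4]; exact hf4
    · rw [List.length_reverse, l3]; exact hf3
    · intro h
      rw [eB2_0] at h
      rw [eS1_last, K1 h]
      norm_num
    · intro h
      rw [eB2_1] at h
      rw [eS1_last]
      have := K2 h
      omega
    · intro h
      rw [eB2_0] at h
      rw [eS1_snd]
      have := K3 h
      omega
    · intro h
      rw [eB1_last] at h
      rw [eS2_0, K4 h]
      norm_num
    · intro h
      rw [eB1_snd] at h
      rw [eS2_0]
      have := K5 h
      omega
    · intro h
      rw [eB1_last] at h
      rw [eS2_1]
      have := K6 h
      omega

/-! ### Bridging lemmas -/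

lemma validShift_iff {k m : ℕ} (hk : 1 ≤ k) (q : ℤ) :
    ValidShift k m q ↔ Valid' (blist k) m q := by
  have key : ∀ idx : ℕ, idx < Nat.fib k →
      (((Nlist k).getD idx []).getLast? = some true ↔ (blist k).getD idx false = true) := by
    intro idx hidx
    have hlen : idx < (Nlist k).length := by rw [Nlist_length]; exact hidx
    rw [blist_eq, List.getD_eq_getElem _ _ hlen,
      List.getD_eq_getElem _ _ (by simpa using hlen), List.getElem_map]
    have hw : (Nlist k)[idx] ≠ [] := Nlist_mem_ne_nil hk (List.getElem_mem _)
    rw [List.getLastD_eq_getLast?]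
    cases hxx : (Nlist k)[idx].getLast? with
    | none => exact absurd (List.getLast?_eq_none_iff.mp hxx) hw
    | some x => simp
  unfold ValidShift Valid'
  rw [blist_length]
  constructor <;> rintro ⟨h1, h2, h3, h4, h5⟩ <;>
    exact ⟨h1, h2, h3, h4, by
      first
        | exact (key _ (by omega)).mp h5
        | exact (key _ (by omega)).mpr h5⟩

lemma flatten_zip_eq_range : ∀ (L : List (List Bool)) (s : List ℤ), L.length = s.length →
    List.zipWith VB L s = (List.range L.length).map (fun m => VB (L.getD m []) (s.getD m 0))
  | [], s, h => by simp
  | (a :: t), [], h => by simp at h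
  | (a :: t), (b :: u), h => by
    simp only [List.zipWith_cons_cons, List.length_cons, List.range_succ_eq_map,
      List.map_cons, List.map_map]
    congr 1
    rw [flatten_zip_eq_range t u (by simpa using h)]
    apply List.map_congr_left
    intro m hm
    rfl

/-- `N_0 = ()`, `N_1 = (1)`, `N_2 = (10)`, `N_3 = (100, 101)`, and
for every `n ≥ 4`, writing `N_{n-1} = (w_0, …, w_{F (n-1) - 1})`: (i) for each
`0 ≤ m < F (n-1)` there is a unique `q(m) ∈ {-2, -1, 0, 1, 2}` of minimal absolute
value such that `0 ≤ m + q(m) < F (n-1)` and `w_{m + q(m)}` ends with the digit `1`;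
(ii) `N_n` is the concatenation over `m = 0, …, F (n-1) - 1` of the blocks `V_m`,
where `V_m = (w_m 0)` if `q(m) = 0`, `V_m = (w_m 0, w_m 1)` if `q(m) ∈ {-1, 2}` and
`V_m = (w_m 1, w_m 0)` if `q(m) ∈ {-2, 1}`. -/
theorem grayCode_demirrored :
    Nlist 0 = [] ∧ Nlist 1 = [[true]] ∧ Nlist 2 = [[true, false]] ∧
    Nlist 3 = [[true, false, false], [true, false, true]] ∧
    ∀ n, 4 ≤ n →
      (∀ m, m < Nat.fib (n - 1) →
        ∃! q : ℤ, ValidShift (n - 1) m q ∧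
          ∀ q' : ℤ, ValidShift (n - 1) m q' → q.natAbs ≤ q'.natAbs) ∧
      ∃ Q : ℕ → ℤ,
        (∀ m, m < Nat.fib (n - 1) →
          ValidShift (n - 1) m (Q m) ∧
            ∀ q' : ℤ, ValidShift (n - 1) m q' → (Q m).natAbs ≤ q'.natAbs) ∧
        Nlist n =
          ((List.range (Nat.fib (n - 1))).map (fun m => Vblock (n - 1) m (Q m))).flatten := by
  refine ⟨rfl, rfl, by decide, by decide, ?_⟩
  intro n hn
  obtain ⟨j, rfl⟩ : ∃ j, n = j + 4 := ⟨n - 4, by omega⟩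
  obtain ⟨hlenQ, hBest⟩ := mainQOK j
  have hflat : Nlist (j + 4) = (List.zipWith VB (Nlist (j + 3)) (Slist (j + 4))).flatten :=
    Nlist_flatten j
  rw [show j + 4 - 1 = j + 3 from rfl]
  have hfib3 : (blist (j + 3)).length = Nat.fib (j + 3) := blist_length _
  have hpack : ∀ m, m < Nat.fib (j + 3) →
      ValidShift (j + 3) m ((Slist (j + 4)).getD m 0) ∧
        ∀ q' : ℤ, ValidShift (j + 3) m q' →
          ((Slist (j + 4)).getD m 0).natAbs ≤ q'.natAbs := by
    intro m hm
    have hm' : m < (blist (j + 3)).length := by rw [hfib3]; exact hm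
    obtain ⟨hv, hmin⟩ := hBest m hm'
    refine ⟨(validShift_iff (by omega) _).mpr hv, ?_⟩
    intro q' hq'
    have hv' := (validShift_iff (by omega) q').mp hq'
    rcases hmin q' (by simp only [Finset.mem_Icc]; exact ⟨hv'.1, hv'.2.1⟩) hv' with h | h
    · omega
    · rw [h]
  constructor
  · intro m hm
    have hm' : m < (blist (j + 3)).length := by rw [hfib3]; exact hm
    obtain ⟨hv, hmin⟩ := hBest m hm'
    obtain ⟨hv1, hmin1⟩ := hpack m hm
    refine ⟨(Slist (j + 4)).getD m 0, ⟨hv1, hmin1⟩, ?_⟩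
    intro y ⟨hy, hymin⟩
    have hvy := (validShift_iff (by omega) y).mp hy
    rcases hmin y (by simp only [Finset.mem_Icc]; exact ⟨hvy.1, hvy.2.1⟩) hvy with h | h
    · have := hymin _ hv1
      omega
    · exact h
  · refine ⟨fun m => (Slist (j + 4)).getD m 0, hpack, ?_⟩
    have hlen : (Nlist (j + 3)).length = (Slist (j + 4)).length := by
      rw [Nlist_length, Slist_length j]
    rw [hflat, flatten_zip_eq_range _ _ hlen, Nlist_length]
    rfl
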